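/- Let 1 ≤ p < ∞, let ρ : [0,1] → ℝ be bounded and measurable, and let y ∈ (0,1). Then ‖ρ − G_y(ρ)‖_p ≤ 2 (1 − y)^{−1/p} τ(ρ, y)_p. (Theorem 4.1, estimate for G_y.) -/

import Mathlib

open MeasureTheory Set Real

/-- Local modulus of continuity of `ρ` at `x` with radius `δ`, relative to `[0,1]`. -/
noncomputable def omegaMod (ρ : ℝ → ℝ) (x δ : ℝ) : ℝ :=
  sSup {d : ℝ | ∃ u ∈ Icc (x - δ) (x + δ) ∩ Icc (0:ℝ) 1,
    ∃ v ∈ Icc (x - δ) (x + δ) ∩ Icc (0:ℝ) 1, d = |ρ u - ρ v|}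

/-- One-sided operator `G_y`. -/
noncomputable def Gop (y : ℝ) (ρ : ℝ → ℝ) (x : ℝ) : ℝ :=
  ∫ t in (0:ℝ)..1, (ρ ((1 - y) * x + y * t) - omegaMod ρ ((1 - y) * x + y * t) y)

/-- One-sided operator `H_y`. -/
noncomputable def Hop (y : ℝ) (ρ : ℝ → ℝ) (x : ℝ) : ℝ :=
  ∫ t in (0:ℝ)..1, (ρ ((1 - y) * x + y * t) + omegaMod ρ ((1 - y) * x + y * t) y)

/-- `L^p` norm on `[0,1]`. -/
noncomputable def lpNorm (p : ℝ) (f : ℝ → ℝ) : ℝ :=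
  (∫ x in (0:ℝ)..1, |f x| ^ p) ^ (1 / p)

/-- Averaged modulus of smoothness `τ(ρ, δ)_p`. -/
noncomputable def tau (p : ℝ) (ρ : ℝ → ℝ) (δ : ℝ) : ℝ :=
  lpNorm p (fun x => omegaMod ρ x δ)

/-- The step function `Φ`. -/
noncomputable def stepPhi (x : ℝ) : ℝ := if 0 < x then 1 else 0

/-- Operator `M_k` built from polynomials `P ≤ Φ ≤ Q`, applied to `f` with
`f x = f 0 + ∫_0^x g`. -/
noncomputable def Mop (P Q : Polynomial ℝ) (f0 : ℝ) (g : ℝ → ℝ) (x : ℝ) : ℝ :=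
  f0 + (∫ t in (0:ℝ)..1, P.eval (x - t) * max (g t) 0)
     - ∫ t in (0:ℝ)..1, Q.eval (x - t) * max (-g t) 0

/-- Operator `N_k` built from polynomials `P ≤ Φ ≤ Q`, applied to `f` with
`f x = f 0 + ∫_0^x g`. -/
noncomputable def Nop (P Q : Polynomial ℝ) (f0 : ℝ) (g : ℝ → ℝ) (x : ℝ) : ℝ :=
  f0 + (∫ t in (0:ℝ)..1, Q.eval (x - t) * max (g t) 0)
     - ∫ t in (0:ℝ)..1, P.eval (x - t) * max (-g t) 0

/-- Degree of best one-sided approximation by polynomials of degree at most `k`. -/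
noncomputable def bestE (p : ℝ) (k : ℕ) (ρ : ℝ → ℝ) : ℝ :=
  sInf {c : ℝ | ∃ P Q : Polynomial ℝ, P.natDegree ≤ k ∧ Q.natDegree ≤ k ∧
    (∀ x ∈ Icc (0:ℝ) 1, P.eval x ≤ ρ x ∧ ρ x ≤ Q.eval x) ∧
    c = lpNorm p (fun x => Q.eval x - P.eval x)}


lemma winSup_meas {ρ : ℝ → ℝ} (hρ : Measurable ρ) {M δ : ℝ}
    (hM : ∀ x ∈ Icc (0:ℝ) 1, ρ x ≤ M) (hδ : 0 < δ) :
    Measurable (fun x => if x ∈ Icc (0:ℝ) 1 then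
      sSup (ρ '' (Icc (x - δ) (x + δ) ∩ Icc 0 1)) else 0) := by
  apply measurable_of_Ioi
  intro c
  set E : Set ℝ := Icc (0:ℝ) 1 ∩ ρ ⁻¹' (Ioi c) with hE
  have hEm : MeasurableSet E := measurableSet_Icc.inter (hρ measurableSet_Ioi)
  set D : Set ℝ := ((⋃ u ∈ E, Ioo (u - δ) (u + δ)) ∪ ((· - δ) ⁻¹' E)) ∪ ((· + δ) ⁻¹' E)
    with hD
  have hDm : MeasurableSet D := by
    refine (MeasurableSet.union (MeasurableSet.union ?_ ?_) ?_)
    · exact (isOpen_biUnion fun u _ => isOpen_Ioo).measurableSet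
    · exact (measurable_id.sub_const δ) hEm
    · exact (measurable_id.add_const δ) hEm
  have hDiff : ∀ x : ℝ, x ∈ D ↔ ∃ u ∈ Icc (0:ℝ) 1, |u - x| ≤ δ ∧ c < ρ u := by
    intro x
    constructor
    · rintro ((h | h) | h)
      · simp only [mem_iUnion, mem_Ioo] at h
        obtain ⟨u, hu, hx1, hx2⟩ := h
        exact ⟨u, hu.1, abs_le.2 ⟨by linarith, by linarith⟩, hu.2⟩
      · exact ⟨x - δ, h.1, by rw [show x - δ - x = -δ by ring, abs_neg, abs_of_pos hδ], h.2⟩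
      · exact ⟨x + δ, h.1, by rw [show x + δ - x = δ by ring, abs_of_pos hδ], h.2⟩
    · rintro ⟨u, hu01, huδ, huc⟩
      rcases lt_or_eq_of_le huδ with h | h
      · left; left
        simp only [mem_iUnion, mem_Ioo]
        have := abs_lt.1 h
        exact ⟨u, ⟨hu01, huc⟩, by linarith [this.1, this.2], by linarith [this.1, this.2]⟩
      · rcases (abs_eq hδ.le).1 h with h' | h'
        · right
          have : x + δ = u := by linarith
          simp only [mem_preimage, this]
          exact ⟨hu01, huc⟩
        · left; right
          have : x - δ = u := by linarith
          simp only [mem_preimage, this]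
          exact ⟨hu01, huc⟩
  have hset : (fun x => if x ∈ Icc (0:ℝ) 1 then
        sSup (ρ '' (Icc (x - δ) (x + δ) ∩ Icc 0 1)) else 0) ⁻¹' (Ioi c)
      = (Icc (0:ℝ) 1 ∩ D) ∪ (if c < 0 then (Icc (0:ℝ) 1)ᶜ else ∅) := by
    ext x
    by_cases hx : x ∈ Icc (0:ℝ) 1
    · have hxw : x ∈ Icc (x - δ) (x + δ) ∩ Icc (0:ℝ) 1 :=
        ⟨⟨by linarith [hδ.le], by linarith [hδ.le]⟩, hx⟩
      have hne : (ρ '' (Icc (x - δ) (x + δ) ∩ Icc 0 1)).Nonempty := ⟨ρ x, x, hxw, rfl⟩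
      have hbdd : BddAbove (ρ '' (Icc (x - δ) (x + δ) ∩ Icc 0 1)) := by
        refine ⟨M, ?_⟩
        rintro _ ⟨u, ⟨_, hu⟩, rfl⟩
        exact hM u hu
      simp only [mem_preimage, mem_Ioi, if_pos hx, mem_union, mem_inter_iff, hx, true_and]
      constructor
      · intro h
        obtain ⟨_, ⟨u, ⟨huw, hu01⟩, rfl⟩, hcu⟩ := exists_lt_of_lt_csSup hne h
        refine Or.inl ((hDiff x).2 ⟨u, hu01, abs_le.2 ⟨?_, ?_⟩, hcu⟩)
        · linarith [huw.1]
        · linarith [huw.2]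
      · rintro (h | h)
        · obtain ⟨u, hu01, huδ, hcu⟩ := (hDiff x).1 h
          have habs := abs_le.1 huδ
          refine lt_of_lt_of_le hcu (le_csSup hbdd ⟨u, ⟨⟨?_, ?_⟩, hu01⟩, rfl⟩)
          · linarith [habs.1]
          · linarith [habs.2]
        · exfalso
          split_ifs at h with hc
          · exact h hx
          · exact h
    · by_cases hc : c < 0
      · simp only [mem_preimage, mem_Ioi, if_neg hx, mem_union, mem_inter_iff, hx, false_and,
          false_or, if_pos hc, mem_compl_iff]
        exact iff_of_true hc (fun h => h)
      · simp only [mem_preimage, mem_Ioi, if_neg hx, mem_union, mem_inter_iff, hx, false_and,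
          false_or, if_neg hc, mem_empty_iff_false]
        exact iff_of_false hc (fun h => h)
  rw [hset]
  refine (measurableSet_Icc.inter hDm).union ?_
  split_ifs
  · exact measurableSet_Icc.compl
  · exact MeasurableSet.empty

lemma omegaMod_spec {ρ : ℝ → ℝ} {M : ℝ} (hM : ∀ u ∈ Icc (0:ℝ) 1, |ρ u| ≤ M)
    {δ : ℝ} (hδ : 0 < δ) {x : ℝ} (hx : x ∈ Icc (0:ℝ) 1) :
    0 ≤ omegaMod ρ x δ ∧ omegaMod ρ x δ ≤ 2 * M ∧
    (∀ u ∈ Icc (x - δ) (x + δ) ∩ Icc (0:ℝ) 1, ∀ v ∈ Icc (x - δ) (x + δ) ∩ Icc (0:ℝ) 1,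
      |ρ u - ρ v| ≤ omegaMod ρ x δ) ∧
    omegaMod ρ x δ = sSup (ρ '' (Icc (x - δ) (x + δ) ∩ Icc 0 1))
      + sSup ((fun u => -ρ u) '' (Icc (x - δ) (x + δ) ∩ Icc 0 1)) := by
  set A := Icc (x - δ) (x + δ) ∩ Icc (0:ℝ) 1 with hA
  have hxA : x ∈ A := ⟨⟨by linarith [hδ.le], by linarith [hδ.le]⟩, hx⟩
  set Dset := {d : ℝ | ∃ u ∈ A, ∃ v ∈ A, d = |ρ u - ρ v|} with hDset
  have homega : omegaMod ρ x δ = sSup Dset := rfl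
  have hDne : Dset.Nonempty := ⟨|ρ x - ρ x|, x, hxA, x, hxA, rfl⟩
  have hDub : ∀ d ∈ Dset, d ≤ 2 * M := by
    rintro d ⟨u, hu, v, hv, rfl⟩
    have h1 := abs_le.1 (hM u hu.2)
    have h2 := abs_le.1 (hM v hv.2)
    exact abs_le.2 ⟨by linarith, by linarith⟩
  have hDbdd : BddAbove Dset := ⟨2 * M, hDub⟩
  have hpair : ∀ u ∈ A, ∀ v ∈ A, |ρ u - ρ v| ≤ omegaMod ρ x δ := fun u hu v hv =>
    le_csSup hDbdd ⟨u, hu, v, hv, rfl⟩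
  have h0 : 0 ≤ omegaMod ρ x δ := by
    have := hpair x hxA x hxA
    simpa using this
  have hle : omegaMod ρ x δ ≤ 2 * M := csSup_le hDne hDub
  have hne1 : (ρ '' A).Nonempty := ⟨ρ x, x, hxA, rfl⟩
  have hne2 : ((fun u => -ρ u) '' A).Nonempty := ⟨-ρ x, x, hxA, rfl⟩
  have hbdd1 : BddAbove (ρ '' A) := by
    refine ⟨M, ?_⟩
    rintro _ ⟨u, hu, rfl⟩
    exact (abs_le.1 (hM u hu.2)).2
  have hbdd2 : BddAbove ((fun u => -ρ u) '' A) := by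
    refine ⟨M, ?_⟩
    rintro _ ⟨u, hu, rfl⟩
    have := (abs_le.1 (hM u hu.2)).1
    simp only
    linarith
  refine ⟨h0, hle, hpair, le_antisymm ?_ ?_⟩
  · refine csSup_le hDne ?_
    rintro d ⟨u, hu, v, hv, rfl⟩
    have h1 : ρ u ≤ sSup (ρ '' A) := le_csSup hbdd1 ⟨u, hu, rfl⟩
    have h2 : ρ v ≤ sSup (ρ '' A) := le_csSup hbdd1 ⟨v, hv, rfl⟩
    have h3 : -ρ u ≤ sSup ((fun u => -ρ u) '' A) := le_csSup hbdd2 ⟨u, hu, rfl⟩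
    have h4 : -ρ v ≤ sSup ((fun u => -ρ u) '' A) := le_csSup hbdd2 ⟨v, hv, rfl⟩
    exact abs_le.2 ⟨by linarith, by linarith⟩
  · have key : sSup (ρ '' A) ≤ sSup Dset - sSup ((fun u => -ρ u) '' A) := by
      refine csSup_le hne1 ?_
      rintro _ ⟨u, hu, rfl⟩
      have h5 : sSup ((fun u => -ρ u) '' A) ≤ sSup Dset - ρ u := by
        refine csSup_le hne2 ?_
        rintro _ ⟨v, hv, rfl⟩
        have h6 : |ρ u - ρ v| ≤ sSup Dset := le_csSup hDbdd ⟨u, hu, v, hv, rfl⟩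
        have h7 : ρ u - ρ v ≤ |ρ u - ρ v| := le_abs_self _
        simp only
        linarith
      linarith
    linarith

lemma g_meas {ρ : ℝ → ℝ} (hρ : Measurable ρ) {M : ℝ}
    (hM : ∀ u ∈ Icc (0:ℝ) 1, |ρ u| ≤ M) {δ : ℝ} (hδ : 0 < δ) :
    Measurable (fun x => if x ∈ Icc (0:ℝ) 1 then omegaMod ρ x δ else 0) := by
  have h1 := winSup_meas hρ (M := M) (fun u hu => (abs_le.1 (hM u hu)).2) hδ
  have h2 := winSup_meas (ρ := fun u => -ρ u) hρ.neg (M := M)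
    (fun u hu => by have := (abs_le.1 (hM u hu)).1; linarith) hδ
  have heq : (fun x => if x ∈ Icc (0:ℝ) 1 then omegaMod ρ x δ else 0)
      = fun x => (if x ∈ Icc (0:ℝ) 1 then sSup (ρ '' (Icc (x - δ) (x + δ) ∩ Icc 0 1)) else 0)
        + (if x ∈ Icc (0:ℝ) 1 then
            sSup ((fun u => -ρ u) '' (Icc (x - δ) (x + δ) ∩ Icc 0 1)) else 0) := by
    funext x
    by_cases hx : x ∈ Icc (0:ℝ) 1
    · simp only [if_pos hx]
      exact (omegaMod_spec hM hδ hx).2.2.2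
    · simp [hx]
  rw [heq]
  exact h1.add h2

/-- Theorem 4.1, estimate for `G_y`. -/
theorem stmt6 (p : ℝ) (hp : 1 ≤ p) (ρ : ℝ → ℝ) (hmeas : Measurable ρ)
    (hbdd : ∃ M : ℝ, ∀ x ∈ Icc (0:ℝ) 1, |ρ x| ≤ M)
    (y : ℝ) (hy : y ∈ Ioo (0:ℝ) 1) :
    lpNorm p (fun x => ρ x - Gop y ρ x) ≤
      2 * (1 - y) ^ (-(1 / p) : ℝ) * tau p ρ y := by
  obtain ⟨M₀, hM₀⟩ := hbdd
  obtain ⟨hy0, hy1⟩ := hy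
  have hp0 : 0 < p := lt_of_lt_of_le one_pos hp
  set M := max M₀ 0 with hMdef
  have hM : ∀ u ∈ Icc (0:ℝ) 1, |ρ u| ≤ M := fun u hu => (hM₀ u hu).trans (le_max_left _ _)
  have hMnn : (0:ℝ) ≤ M := le_max_right _ _
  have ha : (0:ℝ) < 1 - y := by linarith
  set g : ℝ → ℝ := fun x => if x ∈ Icc (0:ℝ) 1 then omegaMod ρ x y else 0 with hgdef
  have hgmeas : Measurable g := g_meas hmeas hM hy0
  have hgnn : ∀ x, 0 ≤ g x := by
    intro x
    by_cases hx : x ∈ Icc (0:ℝ) 1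
    · simp only [hgdef]
      rw [if_pos hx]
      exact (omegaMod_spec hM hy0 hx).1
    · simp only [hgdef]
      rw [if_neg hx]
  have hgle : ∀ x, g x ≤ 2 * M := by
    intro x
    by_cases hx : x ∈ Icc (0:ℝ) 1
    · simp only [hgdef]
      rw [if_pos hx]
      exact (omegaMod_spec hM hy0 hx).2.1
    · simp only [hgdef]
      rw [if_neg hx]
      positivity
  have hs_mem : ∀ x ∈ Icc (0:ℝ) 1, ∀ t ∈ Icc (0:ℝ) 1, (1 - y) * x + y * t ∈ Icc (0:ℝ) 1 := by
    intro x hx t ht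
    constructor
    · have h1 : 0 ≤ (1 - y) * x := mul_nonneg ha.le hx.1
      have h2 : 0 ≤ y * t := mul_nonneg hy0.le ht.1
      linarith
    · have h1 : (1 - y) * x ≤ (1 - y) * 1 := by nlinarith [hx.2]
      have h2 : y * t ≤ y * 1 := by nlinarith [ht.2]
      linarith
  have haff : ∀ x : ℝ, Measurable (fun t : ℝ => (1 - y) * x + y * t) := fun x =>
    measurable_const.add (measurable_id.const_mul y)
  have hII : ∀ (F : ℝ → ℝ) (C : ℝ), Measurable F → (∀ t ∈ Ioc (0:ℝ) 1, |F t| ≤ C) →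
      IntervalIntegrable F volume 0 1 := by
    intro F C hF hb
    rw [intervalIntegrable_iff_integrableOn_Ioc_of_le zero_le_one]
    refine Measure.integrableOn_of_bounded (M := C) (by simp) hF.aestronglyMeasurable ?_
    refine (ae_restrict_iff' measurableSet_Ioc).2 (Filter.Eventually.of_forall fun t ht => ?_)
    rw [Real.norm_eq_abs]
    exact hb t ht
  have I1 : ∀ x ∈ Icc (0:ℝ) 1,
      IntervalIntegrable (fun t => ρ ((1 - y) * x + y * t)) volume 0 1 := by
    intro x hx
    exact hII _ M (hmeas.comp (haff x)) fun t ht =>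
      hM _ (hs_mem x hx t (Ioc_subset_Icc_self ht))
  have I2 : ∀ x : ℝ, IntervalIntegrable (fun t => g ((1 - y) * x + y * t)) volume 0 1 := by
    intro x
    refine hII _ (2 * M) (hgmeas.comp (haff x)) fun t _ => ?_
    rw [abs_of_nonneg (hgnn _)]
    exact hgle _
  have hwin : ∀ x ∈ Icc (0:ℝ) 1, ∀ t ∈ Icc (0:ℝ) 1,
      |ρ x - ρ ((1 - y) * x + y * t)| ≤ g ((1 - y) * x + y * t) := by
    intro x hx t ht
    have hst : (1 - y) * x + y * t ∈ Icc (0:ℝ) 1 := hs_mem x hx t ht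
    have hd : |x - ((1 - y) * x + y * t)| ≤ y := by
      rw [show x - ((1 - y) * x + y * t) = y * (x - t) by ring, abs_mul, abs_of_pos hy0]
      have h3 : |x - t| ≤ 1 := abs_le.2 ⟨by linarith [hx.1, ht.2], by linarith [hx.2, ht.1]⟩
      nlinarith
    have hd' := abs_le.1 hd
    rw [hgdef]
    simp only [if_pos hst]
    exact (omegaMod_spec hM hy0 hst).2.2.1 x ⟨⟨by linarith [hd'.1], by linarith [hd'.2]⟩, hx⟩
      ((1 - y) * x + y * t) ⟨⟨by linarith [hy0.le], by linarith [hy0.le]⟩, hst⟩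
  have key : ∀ x ∈ Icc (0:ℝ) 1,
      |ρ x - Gop y ρ x| ≤ ∫ t in (0:ℝ)..1, 2 * g ((1 - y) * x + y * t) := by
    intro x hx
    have hGeq : Gop y ρ x
        = ∫ t in (0:ℝ)..1, (ρ ((1 - y) * x + y * t) - g ((1 - y) * x + y * t)) := by
      unfold Gop
      refine intervalIntegral.integral_congr ?_
      intro t ht
      rw [uIcc_of_le zero_le_one] at ht
      have hst := hs_mem x hx t ht
      simp only [hgdef]
      rw [if_pos hst]
    have hIconst : IntervalIntegrable (fun _ : ℝ => ρ x) volume 0 1 := intervalIntegrable_const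
    have hI1 := I1 x hx
    have hI2 := I2 x
    have hsplit : ∫ t in (0:ℝ)..1,
        (ρ x - ρ ((1 - y) * x + y * t) + g ((1 - y) * x + y * t)) = ρ x - Gop y ρ x := by
      rw [intervalIntegral.integral_add (hIconst.sub hI1) hI2,
        intervalIntegral.integral_sub hIconst hI1, intervalIntegral.integral_const, hGeq,
        intervalIntegral.integral_sub hI1 hI2]
      simp only [sub_zero, one_smul]
      ring
    have hnn : 0 ≤ ρ x - Gop y ρ x := by
      rw [← hsplit]
      refine intervalIntegral.integral_nonneg zero_le_one fun t ht => ?_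
      have h := abs_le.1 (hwin x hx t ht)
      linarith [h.1]
    rw [abs_of_nonneg hnn, ← hsplit]
    refine intervalIntegral.integral_mono_on zero_le_one ((hIconst.sub hI1).add hI2)
      (hI2.const_mul 2) fun t ht => ?_
    have h := abs_le.1 (hwin x hx t ht)
    linarith [h.2]
  haveI hprob : IsProbabilityMeasure (volume.restrict (Ioc (0:ℝ) 1)) := by
    constructor
    rw [Measure.restrict_apply_univ, Real.volume_Ioc]
    norm_num
  have hφc : Continuous (fun z : ℝ => z ^ p) := Real.continuous_rpow_const hp0.le
  have I2p : ∀ x : ℝ,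
      IntervalIntegrable (fun t => (2 * g ((1 - y) * x + y * t)) ^ p) volume 0 1 := by
    intro x
    refine hII _ ((2 * (2 * M)) ^ p)
      (hφc.measurable.comp ((hgmeas.comp (haff x)).const_mul 2)) fun t _ => ?_
    have h1 : (0:ℝ) ≤ 2 * g ((1 - y) * x + y * t) := mul_nonneg (by norm_num) (hgnn _)
    rw [abs_of_nonneg (Real.rpow_nonneg h1 p)]
    exact Real.rpow_le_rpow h1 (by linarith [hgle ((1 - y) * x + y * t)]) hp0.le
  have jensen : ∀ x ∈ Icc (0:ℝ) 1,
      (∫ t in Ioc (0:ℝ) 1, 2 * g ((1 - y) * x + y * t)) ^ p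
        ≤ ∫ t in Ioc (0:ℝ) 1, (2 * g ((1 - y) * x + y * t)) ^ p := by
    intro x hx
    refine (convexOn_rpow hp).map_integral_le hφc.continuousOn isClosed_Ici
      (Filter.Eventually.of_forall fun t => ?_) ?_ ?_
    · exact mem_Ici.2 (mul_nonneg (by norm_num) (hgnn _))
    · exact ((I2 x).const_mul 2).1
    · exact (I2p x).1
  have key2 : ∀ x ∈ Ioc (0:ℝ) 1, |ρ x - Gop y ρ x| ^ p
      ≤ ∫ t in Ioc (0:ℝ) 1, (2 * g ((1 - y) * x + y * t)) ^ p := by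
    intro x hx
    have hx' : x ∈ Icc (0:ℝ) 1 := Ioc_subset_Icc_self hx
    have h2 : |ρ x - Gop y ρ x| ^ p
        ≤ (∫ t in Ioc (0:ℝ) 1, 2 * g ((1 - y) * x + y * t)) ^ p := by
      rw [← intervalIntegral.integral_of_le zero_le_one]
      exact Real.rpow_le_rpow (abs_nonneg _) (key x hx') hp0.le
    exact h2.trans (jensen x hx')
  set Fb : ℝ → ℝ → ℝ := fun x t => (2 * g ((1 - y) * x + y * t)) ^ p with hFb
  have hFbmeas : Measurable (fun q : ℝ × ℝ => (2 * g ((1 - y) * q.1 + y * q.2)) ^ p) := by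
    have h0 : Measurable (fun q : ℝ × ℝ => 2 * g ((1 - y) * q.1 + y * q.2)) :=
      (hgmeas.comp ((measurable_fst.const_mul (1 - y)).add
        (measurable_snd.const_mul y))).const_mul 2
    exact hφc.measurable.comp h0
  have hFbint : Integrable (Function.uncurry Fb)
      ((volume.restrict (Ioc (0:ℝ) 1)).prod (volume.restrict (Ioc (0:ℝ) 1))) := by
    refine Integrable.mono' (integrable_const ((2 * (2 * M)) ^ p))
      hFbmeas.aestronglyMeasurable (Filter.Eventually.of_forall fun q => ?_)
    have h1 : (0:ℝ) ≤ 2 * g ((1 - y) * q.1 + y * q.2) := mul_nonneg (by norm_num) (hgnn _)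
    show ‖(2 * g ((1 - y) * q.1 + y * q.2)) ^ p‖ ≤ (2 * (2 * M)) ^ p
    rw [Real.norm_eq_abs, abs_of_nonneg (Real.rpow_nonneg h1 p)]
    exact Real.rpow_le_rpow h1 (by linarith [hgle ((1 - y) * q.1 + y * q.2)]) hp0.le
  have hswap := MeasureTheory.integral_integral_swap (f := Fb) hFbint
  have hHint : Integrable (fun x => ∫ t, Fb x t ∂(volume.restrict (Ioc (0:ℝ) 1)))
      (volume.restrict (Ioc (0:ℝ) 1)) := hFbint.integral_prod_left
  have step1 : (∫ x in Ioc (0:ℝ) 1, |ρ x - Gop y ρ x| ^ p)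
      ≤ ∫ x in Ioc (0:ℝ) 1, ∫ t in Ioc (0:ℝ) 1, Fb x t := by
    refine integral_mono_of_nonneg
      (Filter.Eventually.of_forall fun x => Real.rpow_nonneg (abs_nonneg _) p) hHint ?_
    exact (ae_restrict_iff' measurableSet_Ioc).2 (Filter.Eventually.of_forall fun x hx => key2 x hx)
  have hT : IntervalIntegrable (fun u => (2 * g u) ^ p) volume 0 1 := by
    refine hII _ ((2 * (2 * M)) ^ p) (hφc.measurable.comp (hgmeas.const_mul 2)) fun t _ => ?_
    have h1 : (0:ℝ) ≤ 2 * g t := mul_nonneg (by norm_num) (hgnn _)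
    rw [abs_of_nonneg (Real.rpow_nonneg h1 p)]
    exact Real.rpow_le_rpow h1 (by linarith [hgle t]) hp0.le
  have inner_bound : ∀ t ∈ Ioc (0:ℝ) 1,
      (∫ x in Ioc (0:ℝ) 1, Fb x t) ≤ (1 - y)⁻¹ * ∫ u in (0:ℝ)..1, (2 * g u) ^ p := by
    intro t ht
    have h1 : (∫ x in Ioc (0:ℝ) 1, Fb x t)
        = (1 - y)⁻¹ • ∫ u in ((1 - y) * 0 + y * t)..((1 - y) * 1 + y * t), (2 * g u) ^ p := by
      rw [← intervalIntegral.integral_of_le zero_le_one]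
      exact intervalIntegral.integral_comp_mul_add (f := fun u => (2 * g u) ^ p) ha.ne' (y * t)
    rw [h1, smul_eq_mul]
    refine mul_le_mul_of_nonneg_left ?_ (inv_nonneg.2 ha.le)
    refine intervalIntegral.integral_mono_interval ?_ ?_ ?_
      (Filter.Eventually.of_forall fun u =>
        Real.rpow_nonneg (mul_nonneg (by norm_num) (hgnn _)) p) hT
    · have := ht.1
      nlinarith
    · nlinarith
    · have := ht.2
      nlinarith
  have step2 : (∫ t in Ioc (0:ℝ) 1, ∫ x in Ioc (0:ℝ) 1, Fb x t)
      ≤ (1 - y)⁻¹ * ∫ u in (0:ℝ)..1, (2 * g u) ^ p := by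
    have hconst : (∫ _t in Ioc (0:ℝ) 1, ((1 - y)⁻¹ * ∫ u in (0:ℝ)..1, (2 * g u) ^ p))
        = (1 - y)⁻¹ * ∫ u in (0:ℝ)..1, (2 * g u) ^ p := by
      rw [integral_const]
      simp
    refine le_trans (integral_mono_of_nonneg ?_ (integrable_const _) ?_) (le_of_eq hconst)
    · exact Filter.Eventually.of_forall fun t =>
        integral_nonneg fun x => Real.rpow_nonneg (mul_nonneg (by norm_num) (hgnn _)) p
    · exact (ae_restrict_iff' measurableSet_Ioc).2 (Filter.Eventually.of_forall inner_bound)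
  have main : (∫ x in (0:ℝ)..1, |ρ x - Gop y ρ x| ^ p)
      ≤ (1 - y)⁻¹ * ∫ u in (0:ℝ)..1, (2 * g u) ^ p := by
    rw [intervalIntegral.integral_of_le zero_le_one]
    calc (∫ x in Ioc (0:ℝ) 1, |ρ x - Gop y ρ x| ^ p)
        ≤ ∫ x in Ioc (0:ℝ) 1, ∫ t in Ioc (0:ℝ) 1, Fb x t := step1
      _ = ∫ t in Ioc (0:ℝ) 1, ∫ x in Ioc (0:ℝ) 1, Fb x t := hswap
      _ ≤ _ := step2
  have hT2 : (∫ u in (0:ℝ)..1, (2 * g u) ^ p) = 2 ^ p * ∫ u in (0:ℝ)..1, g u ^ p := by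
    have heq : (fun u => (2 * g u) ^ p) = fun u => 2 ^ p * g u ^ p :=
      funext fun u => Real.mul_rpow (by norm_num) (hgnn u)
    rw [heq, intervalIntegral.integral_const_mul]
  have hTgnn : 0 ≤ ∫ u in (0:ℝ)..1, g u ^ p :=
    intervalIntegral.integral_nonneg zero_le_one fun u _ => Real.rpow_nonneg (hgnn u) p
  have htau : tau p ρ y = (∫ u in (0:ℝ)..1, g u ^ p) ^ (1 / p) := by
    unfold tau _root_.lpNorm
    congr 1
    refine intervalIntegral.integral_congr ?_
    intro u hu
    rw [uIcc_of_le zero_le_one] at hu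
    simp only [hgdef]
    rw [if_pos hu, abs_of_nonneg (omegaMod_spec hM hy0 hu).1]
  have hLHS : lpNorm p (fun x => ρ x - Gop y ρ x)
      = (∫ x in (0:ℝ)..1, |ρ x - Gop y ρ x| ^ p) ^ (1 / p) := rfl
  rw [hLHS, htau]
  have hmono := Real.rpow_le_rpow
    (intervalIntegral.integral_nonneg zero_le_one fun x _ => Real.rpow_nonneg (abs_nonneg _) p)
    main (one_div_nonneg.2 hp0.le)
  refine hmono.trans (le_of_eq ?_)
  rw [hT2, show (1 - y)⁻¹ * (2 ^ p * ∫ u in (0:ℝ)..1, g u ^ p)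
      = 2 ^ p * ((1 - y)⁻¹ * ∫ u in (0:ℝ)..1, g u ^ p) by ring]
  rw [Real.mul_rpow (Real.rpow_nonneg (by norm_num) p) (mul_nonneg (inv_nonneg.2 ha.le) hTgnn),
    Real.mul_rpow (inv_nonneg.2 ha.le) hTgnn,
    ← Real.rpow_mul (by norm_num : (0:ℝ) ≤ 2), mul_one_div_cancel hp0.ne', Real.rpow_one,
    Real.inv_rpow ha.le, ← Real.rpow_neg ha.le]
  ring
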